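/- For every integer N ≥ 1 and every real q with 0 < q < 1: ∑_{n=1}^{N−1} q(1−q)^{n−1} · R(n, q/2) + (1−q)^{N−1} · R(N, q/2) ≤ 6/q². -/

import Mathlib

/-- `R n p = (1/(2p²))·((1−p)^{−(n−1)} − (1−p))`, the exact expected run time of the
(1+1) EA with uniform bit flip probability `p` on the `n`-bit LeadingOnes function
(Böttcher–Doerr–Neumann, Sudholt, Ladret). -/
noncomputable def runtimeLO (n : ℕ) (p : ℝ) : ℝ :=
  (1 / (2 * p ^ 2)) * ((1 - p) ^ (-((n : ℤ) - 1)) - (1 - p))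

/-- Analytic core of Theorem 3.11: the `TrunkGeo(N,q)`-average of `R(n, q/2)` is at
most `6/q²`. -/
theorem stmt8 (N : ℕ) (hN : 1 ≤ N) (q : ℝ) (hq0 : 0 < q) (hq1 : q < 1) :
    (∑ n ∈ Finset.Icc 1 (N - 1), q * (1 - q) ^ (n - 1) * runtimeLO n (q / 2)) +
      (1 - q) ^ (N - 1) * runtimeLO N (q / 2) ≤ 6 / q ^ 2 := by
  have hq2 : (0:ℝ) < q ^ 2 := by positivity
  set r : ℝ := 1 - q / 2 with hrdef
  have hr0 : 0 < r := by rw [hrdef]; linarith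
  have hr1 : r < 1 := by rw [hrdef]; linarith
  have hrne : r ≠ 1 := ne_of_lt hr1
  clear_value r
  -- key pointwise bound
  have key : ∀ n : ℕ, 1 ≤ n →
      (1 - q) ^ (n - 1) * runtimeLO n (q / 2) ≤ 2 / q ^ 2 * r ^ (n - 1) := by
    intro n hn
    obtain ⟨k, rfl⟩ : ∃ k, n = k + 1 := ⟨n - 1, (Nat.succ_pred_eq_of_pos hn).symm⟩
    have hz : r ^ (-(((k + 1 : ℕ) : ℤ) - 1)) = (r ^ k)⁻¹ := by
      have h1 : (-(((k + 1 : ℕ) : ℤ) - 1)) = -(k : ℤ) := by push_cast; ring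
      rw [h1, zpow_neg, zpow_natCast]
    have hrk : 0 < r ^ k := pow_pos hr0 k
    have hpow : (1 - q) ^ k ≤ (r ^ k) * (r ^ k) := by
      rw [← pow_add, ← two_mul, pow_mul]
      apply pow_le_pow_left₀ (by linarith)
      rw [hrdef]; nlinarith
    simp only [runtimeLO, Nat.add_sub_cancel, ← hrdef, hz]
    have h2q : (1 / (2 * (q / 2) ^ 2) : ℝ) = 2 / q ^ 2 := by
      field_simp
    rw [h2q]
    have h1 : (1 - q) ^ k * (r ^ k)⁻¹ ≤ r ^ k := by
      rw [mul_inv_le_iff₀ hrk]; exact hpow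
    have h2 : 0 ≤ (1 - q) ^ k * r := mul_nonneg (pow_nonneg (by linarith) k) hr0.le
    have hc : (0:ℝ) ≤ 2 / q ^ 2 := by positivity
    calc (1 - q) ^ k * (2 / q ^ 2 * ((r ^ k)⁻¹ - r))
        = 2 / q ^ 2 * ((1 - q) ^ k * (r ^ k)⁻¹ - (1 - q) ^ k * r) := by ring
      _ ≤ 2 / q ^ 2 * r ^ k := by
          apply mul_le_mul_of_nonneg_left _ hc
          linarith
  -- bound the sum termwise
  have sum_le : (∑ n ∈ Finset.Icc 1 (N - 1), q * (1 - q) ^ (n - 1) * runtimeLO n (q / 2))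
      ≤ ∑ n ∈ Finset.Icc 1 (N - 1), q * (2 / q ^ 2 * r ^ (n - 1)) := by
    apply Finset.sum_le_sum
    intro n hn
    have hn1 : 1 ≤ n := (Finset.mem_Icc.mp hn).1
    rw [mul_assoc]
    exact mul_le_mul_of_nonneg_left (key n hn1) hq0.le
  -- rewrite the right-hand sum as a geometric sum
  have hre : ∑ n ∈ Finset.Icc 1 (N - 1), q * (2 / q ^ 2 * r ^ (n - 1))
      = q * (2 / q ^ 2) * ∑ i ∈ Finset.range (N - 1), r ^ i := by
    have hIcc : Finset.Icc 1 (N - 1) = Finset.Ico 1 N := by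
      rw [← Finset.Ico_add_one_right_eq_Icc, Nat.sub_add_cancel hN]
    rw [hIcc, Finset.mul_sum, Finset.sum_Ico_eq_sum_range]
    simp [mul_assoc]
  have hgs : ∑ i ∈ Finset.range (N - 1), r ^ i = (r ^ (N - 1) - 1) / (r - 1) :=
    geom_sum_eq hrne _
  have hx0 : (0:ℝ) ≤ r ^ (N - 1) := pow_nonneg hr0.le _
  have hx1 : r ^ (N - 1) ≤ 1 := pow_le_one₀ hr0.le hr1.le
  have hrm1 : r - 1 = -(q / 2) := by rw [hrdef]; ring
  have e1 : q * (2 / q ^ 2) * ((r ^ (N - 1) - 1) / (r - 1)) + 2 / q ^ 2 * r ^ (N - 1)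
      = (4 - 2 * r ^ (N - 1)) / q ^ 2 := by
    rw [hrm1]
    field_simp
    ring
  calc (∑ n ∈ Finset.Icc 1 (N - 1), q * (1 - q) ^ (n - 1) * runtimeLO n (q / 2)) +
      (1 - q) ^ (N - 1) * runtimeLO N (q / 2)
      ≤ q * (2 / q ^ 2) * ((r ^ (N - 1) - 1) / (r - 1)) + 2 / q ^ 2 * r ^ (N - 1) := by
        rw [← hgs, ← hre]
        exact add_le_add sum_le (key N hN)
    _ = (4 - 2 * r ^ (N - 1)) / q ^ 2 := e1
    _ ≤ 6 / q ^ 2 := by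
        exact (div_le_div_iff_of_pos_right hq2).mpr (by linarith)
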